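/- Let α be a nonzero algebraic integer (a complex number that is a root of a monic polynomial with integer coefficients) such that every complex root of its minimal polynomial over ℚ has absolute value at most 1. Then α is a root of unity. -/

import Mathlib

/-- **Kronecker's theorem.** A nonzero algebraic integer all of whose conjugates
(the complex roots of its minimal polynomial over `ℚ`) have absolute value at
most `1` is a root of unity. -/
theorem kronecker_root_of_unity (α : ℂ) (hint : IsIntegral ℤ α) (hne : α ≠ 0)
    (hconj : ∀ z : ℂ, Polynomial.aeval z (minpoly ℚ α) = 0 → ‖z‖ ≤ 1) :
    ∃ n : ℕ, 0 < n ∧ α ^ n = 1 := by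
  have hQ : IsIntegral ℚ α := hint.tower_top
  let K := IntermediateField.adjoin ℚ ({α} : Set ℂ)
  haveI : FiniteDimensional ℚ K := IntermediateField.adjoin.finiteDimensional hQ
  haveI : NumberField K := ⟨⟩
  set x : K := IntermediateField.AdjoinSimple.gen ℚ α with hxdef
  have hmap : algebraMap K ℂ x = α := rfl
  have hinj : Function.Injective (algebraMap K ℂ) := (algebraMap K ℂ).injective
  have hxi : IsIntegral ℤ x := by
    rwa [← isIntegral_algebraMap_iff hinj, hmap]
  have hxne : x ≠ 0 := fun h => hne (by rw [← hmap, h, map_zero])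
  have hminpoly : minpoly ℚ x = minpoly ℚ α := by rw [← hmap, minpoly.algebraMap_eq hinj]
  have hnorm : ∀ n : ℕ, x ^ n ∈ {y : K | IsIntegral ℤ y ∧ ∀ φ : K →+* ℂ, ‖φ y‖ ≤ 1} := by
    intro n
    refine ⟨hxi.pow n, fun φ => ?_⟩
    have hroot : Polynomial.aeval (φ x) (minpoly ℚ α) = 0 := by
      rw [← hminpoly]
      have := minpoly.aeval ℚ x
      have : Polynomial.aeval (φ.toRatAlgHom x) (minpoly ℚ x) = 0 := by
        rw [Polynomial.aeval_algHom_apply, minpoly.aeval, map_zero]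
      exact this
    have h1 : ‖φ x‖ ≤ 1 := by
      have := hconj (φ x) hroot
      exact this
    calc ‖φ (x ^ n)‖ = ‖φ x‖ ^ n := by rw [map_pow, norm_pow]
    _ ≤ 1 ^ n := pow_le_pow_left₀ (norm_nonneg _) h1 n
    _ = 1 := one_pow n
  have hfin := NumberField.Embeddings.finite_of_norm_le K ℂ (1 : ℝ)
  obtain ⟨a, -, b, -, habne, h⟩ :=
    Set.Infinite.exists_ne_map_eq_of_mapsTo (f := (x ^ · : ℕ → K)) Set.infinite_univ
      (fun n _ => hnorm n) hfin
  wlog hlt : b < a generalizing a b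
  · exact this b a habne.symm h.symm (habne.lt_or_gt.resolve_right hlt)
  have hxn : x ^ (a - b) = 1 := by
    have : x ^ (a - b) * x ^ b = x ^ b := by
      rw [← pow_add, Nat.sub_add_cancel hlt.le, h]
    have hb : x ^ b ≠ 0 := pow_ne_zero _ hxne
    exact mul_right_cancel₀ hb (by rw [this, one_mul])
  refine ⟨a - b, Nat.sub_pos_of_lt hlt, ?_⟩
  have : algebraMap K ℂ (x ^ (a - b)) = 1 := by rw [hxn, map_one]
  rwa [map_pow, hmap] at this
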